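/- (Example: the circle as a minimal invariant set) Let α ∈ ℝ be irrational, let g : ℝ² → ℝ² be the rotation about the origin by angle 2πα, and define f(x, y) = (√(x² + y²)/3 + 2/3, 0). Then the unit circle S = {p ∈ ℝ² : ‖p‖ = 1} satisfies S = g(S) ∪ f(S), and S ⊆ X for every nonempty closed bounded X ⊆ ℝ² with X = g(X) ∪ f(X); i.e. the unit circle is the minimal invariant set of the R-IFS {g, f}. -/

import Mathlib

/-- The rotation of `ℝ²` about the origin by angle `θ`. -/
noncomputable def planeRotation (θ : ℝ) (p : EuclideanSpace ℝ (Fin 2)) :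
    EuclideanSpace ℝ (Fin 2) :=
  WithLp.toLp 2 ![p 0 * Real.cos θ - p 1 * Real.sin θ, p 0 * Real.sin θ + p 1 * Real.cos θ]


open Real

def pairE (a b : ℝ) : EuclideanSpace ℝ (Fin 2) := WithLp.toLp 2 ![a, b]

lemma pairE_app0 (a b : ℝ) : pairE a b 0 = a := rfl
lemma pairE_app1 (a b : ℝ) : pairE a b 1 = b := rfl

lemma my_norm2 (p : EuclideanSpace ℝ (Fin 2)) : ‖p‖ = Real.sqrt ((p 0)^2 + (p 1)^2) := by
  rw [EuclideanSpace.norm_eq]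
  simp [Fin.sum_univ_two, sq_abs]

lemma my_dist2 (p q : EuclideanSpace ℝ (Fin 2)) :
    dist p q = Real.sqrt ((p 0 - q 0)^2 + (p 1 - q 1)^2) := by
  rw [EuclideanSpace.dist_eq]
  simp [Fin.sum_univ_two, Real.dist_eq, sq_abs]

lemma norm_pair (a b : ℝ) : ‖pairE a b‖ = Real.sqrt (a^2 + b^2) := by
  rw [my_norm2, pairE_app0, pairE_app1]

lemma dist_pair (a b c d : ℝ) :
    dist (pairE a b) (pairE c d) = Real.sqrt ((a-c)^2 + (b-d)^2) := by
  rw [my_dist2, pairE_app0, pairE_app1, pairE_app0, pairE_app1]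

noncomputable def circPt (θ : ℝ) : EuclideanSpace ℝ (Fin 2) := pairE (Real.cos θ) (Real.sin θ)

lemma circPt_norm (θ : ℝ) : ‖circPt θ‖ = 1 := by
  rw [circPt, norm_pair, cos_sq_add_sin_sq θ, Real.sqrt_one]

lemma abs_cos_sub_cos_le (a b : ℝ) : |Real.cos a - Real.cos b| ≤ |a - b| := by
  rw [Real.cos_sub_cos]
  have h1 : |Real.sin ((a+b)/2)| ≤ 1 := Real.abs_sin_le_one _
  have h2 : |Real.sin ((a-b)/2)| ≤ |(a-b)/2| := Real.abs_sin_le_abs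
  calc |(-2) * Real.sin ((a+b)/2) * Real.sin ((a-b)/2)|
      = 2 * |Real.sin ((a+b)/2)| * |Real.sin ((a-b)/2)| := by
        rw [abs_mul, abs_mul, abs_neg, abs_two]
    _ ≤ 2 * 1 * |(a-b)/2| := by
        apply mul_le_mul ?_ h2 (abs_nonneg _) (by norm_num)
        exact mul_le_mul_of_nonneg_left h1 (by norm_num)
    _ = |a-b| := by rw [abs_div, abs_two]; ring

lemma abs_sin_sub_sin_le (a b : ℝ) : |Real.sin a - Real.sin b| ≤ |a - b| := by
  rw [Real.sin_sub_sin]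
  have h1 : |Real.cos ((a+b)/2)| ≤ 1 := Real.abs_cos_le_one _
  have h2 : |Real.sin ((a-b)/2)| ≤ |(a-b)/2| := Real.abs_sin_le_abs
  calc |2 * Real.sin ((a-b)/2) * Real.cos ((a+b)/2)|
      = 2 * |Real.sin ((a-b)/2)| * |Real.cos ((a+b)/2)| := by
        rw [abs_mul, abs_mul, abs_two]
    _ ≤ 2 * |(a-b)/2| * 1 := by
        apply mul_le_mul ?_ h1 (abs_nonneg _) (by positivity)
        exact mul_le_mul_of_nonneg_left h2 (by norm_num)
    _ = |a-b| := by rw [abs_div, abs_two]; ring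

lemma circPt_dist (a b : ℝ) : dist (circPt a) (circPt b) ≤ 2 * |a - b| := by
  rw [circPt, circPt, dist_pair]
  have h1 := _root_.abs_cos_sub_cos_le a b
  have h2 := _root_.abs_sin_sub_sin_le a b
  have key : (Real.cos a - Real.cos b)^2 + (Real.sin a - Real.sin b)^2 ≤ (2*|a-b|)^2 := by
    nlinarith [sq_abs (Real.cos a - Real.cos b), sq_abs (Real.sin a - Real.sin b),
      abs_nonneg (a-b), abs_nonneg (Real.cos a - Real.cos b), abs_nonneg (Real.sin a - Real.sin b)]
  calc Real.sqrt _ ≤ Real.sqrt ((2*|a-b|)^2) := Real.sqrt_le_sqrt key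
    _ = 2*|a-b| := Real.sqrt_sq (by positivity)

lemma circPt_periodic (x : ℝ) (m : ℤ) : circPt (x - 2*Real.pi*m) = circPt x := by
  have hc : Real.cos (x - 2*Real.pi*m) = Real.cos x := by
    rw [show x - 2*Real.pi*m = x - m*(2*Real.pi) by ring, Real.cos_sub_int_mul_two_pi]
  have hs : Real.sin (x - 2*Real.pi*m) = Real.sin x := by
    rw [show x - 2*Real.pi*m = x - m*(2*Real.pi) by ring, Real.sin_sub_int_mul_two_pi]
  rw [circPt, circPt, hc, hs]

lemma small_step (α : ℝ) (hα : Irrational α) {ε : ℝ} (hε : 0 < ε) :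
    ∃ k : ℕ, ∃ m : ℤ, 0 < |k * α - m| ∧ |k * α - m| < ε := by
  set u : ℕ → ℝ := fun n => Int.fract (n * α) with hu
  have humem : ∀ n, u n ∈ Set.Icc (0:ℝ) 1 := fun n =>
    ⟨Int.fract_nonneg _, (Int.fract_lt_one _).le⟩
  obtain ⟨x, -, φ, hφ, hlim⟩ := (isCompact_Icc (a := (0:ℝ)) (b := 1)).tendsto_subseq humem
  obtain ⟨N, hN⟩ := Metric.tendsto_atTop.mp hlim (ε/2) (half_pos hε)
  have hab : φ N < φ (N+1) := hφ (Nat.lt_succ_self N)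
  set a := φ N
  set b := φ (N+1)
  have hd : |u b - u a| < ε := by
    have h1 := hN N le_rfl
    have h2 := hN (N+1) (Nat.le_succ N)
    rw [Function.comp_apply, Real.dist_eq] at h1 h2
    calc |u b - u a| ≤ |u b - x| + |x - u a| := abs_sub_le _ _ _
      _ < ε/2 + ε/2 := by rw [abs_sub_comm x (u a)]; exact add_lt_add h2 h1
      _ = ε := add_halves ε
  refine ⟨b - a, ⌊(b:ℝ) * α⌋ - ⌊(a:ℝ) * α⌋, ?_, ?_⟩
  · rw [abs_pos]
    intro h0
    apply hα
    have hk : ((b - a : ℕ) : ℝ) ≠ 0 := by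
      have : 0 < b - a := Nat.sub_pos_of_lt hab
      positivity
    refine ⟨((⌊(b:ℝ) * α⌋ - ⌊(a:ℝ) * α⌋ : ℤ) : ℚ) / ((b - a : ℕ) : ℚ), ?_⟩
    have hcast2 : (((((⌊(b:ℝ) * α⌋ - ⌊(a:ℝ) * α⌋ : ℤ) : ℚ)) / ((b - a : ℕ) : ℚ) : ℚ) : ℝ)
        = (((⌊(b:ℝ) * α⌋ - ⌊(a:ℝ) * α⌋ : ℤ) : ℝ)) / ((b - a : ℕ) : ℝ) := by
      push_cast; ring
    rw [hcast2, div_eq_iff hk]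
    linarith [h0]
  · have hcast : ((b - a : ℕ) : ℝ) = (b : ℝ) - a := by
      push_cast [Nat.cast_sub hab.le]; ring
    have : ((b - a : ℕ) : ℝ) * α - ((⌊(b:ℝ) * α⌋ - ⌊(a:ℝ) * α⌋ : ℤ) : ℝ) = u b - u a := by
      rw [hcast, hu]
      simp only [Int.fract]
      push_cast
      ring
    rwa [this]

lemma dense_nat_mul (α : ℝ) (hα : Irrational α) (t : ℝ) {ε : ℝ} (hε : 0 < ε) :
    ∃ n : ℕ, ∃ m : ℤ, |n * α - m - t| < ε := by
  obtain ⟨k, m, hδ0, hδε⟩ := small_step α hα hε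
  set δ : ℝ := k * α - m with hδdef
  rcases lt_or_gt_of_ne (abs_pos.mp hδ0).symm with hpos | hneg
  · -- δ > 0
    set N : ℕ := ⌈-t⌉.toNat with hNdef
    have hNt : -t ≤ (N : ℝ) := by
      calc -t ≤ (⌈-t⌉ : ℝ) := Int.le_ceil _
        _ ≤ ((⌈-t⌉.toNat : ℤ) : ℝ) := by exact_mod_cast Int.self_le_toNat _
        _ = (N : ℝ) := by push_cast; rfl
    set s : ℝ := t + N with hsdef
    have hs0 : 0 ≤ s := by linarith
    set j : ℕ := ⌈s/δ⌉.toNat with hjdef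
    have hj1 : s/δ ≤ (j : ℝ) := by
      calc s/δ ≤ (⌈s/δ⌉ : ℝ) := Int.le_ceil _
        _ ≤ ((⌈s/δ⌉.toNat : ℤ) : ℝ) := by exact_mod_cast Int.self_le_toNat _
        _ = (j : ℝ) := by push_cast; rfl
    have hj2 : (j : ℝ) < s/δ + 1 := by
      have h1 : (0:ℤ) ≤ ⌈s/δ⌉ := Int.ceil_nonneg (by positivity)
      have : ((j : ℤ) : ℝ) = ((⌈s/δ⌉ : ℤ) : ℝ) := by
        rw [hjdef]; norm_cast; exact Int.toNat_of_nonneg h1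
      push_cast at this
      rw [this]
      exact Int.ceil_lt_add_one _
    refine ⟨j * k, j * m + N, ?_⟩
    have heq : (↑(j * k) : ℝ) * α - ((j * m + N : ℤ) : ℝ) - t = j * δ - s := by
      push_cast; rw [hδdef, hsdef]; ring
    rw [heq, abs_lt]
    constructor
    · have := mul_le_mul_of_nonneg_right hj1 hpos.le
      rw [div_mul_cancel₀ _ (ne_of_gt hpos)] at this
      nlinarith
    · have := mul_lt_mul_of_pos_right hj2 hpos
      rw [add_mul, div_mul_cancel₀ _ (ne_of_gt hpos)] at this
      rw [abs_of_pos hpos] at hδε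
      nlinarith
  · -- δ < 0
    set N : ℕ := ⌈t⌉.toNat with hNdef
    have hNt : t ≤ (N : ℝ) := by
      calc t ≤ (⌈t⌉ : ℝ) := Int.le_ceil _
        _ ≤ ((⌈t⌉.toNat : ℤ) : ℝ) := by exact_mod_cast Int.self_le_toNat _
        _ = (N : ℝ) := by push_cast; rfl
    set s : ℝ := t - N with hsdef
    have hs0 : s ≤ 0 := by linarith
    have hsd : 0 ≤ s/δ := by rw [div_nonneg_iff]; right; exact ⟨hs0, hneg.le⟩
    set j : ℕ := ⌈s/δ⌉.toNat with hjdef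
    have hj1 : s/δ ≤ (j : ℝ) := by
      calc s/δ ≤ (⌈s/δ⌉ : ℝ) := Int.le_ceil _
        _ ≤ ((⌈s/δ⌉.toNat : ℤ) : ℝ) := by exact_mod_cast Int.self_le_toNat _
        _ = (j : ℝ) := by push_cast; rfl
    have hj2 : (j : ℝ) < s/δ + 1 := by
      have h1 : (0:ℤ) ≤ ⌈s/δ⌉ := Int.ceil_nonneg hsd
      have : ((j : ℤ) : ℝ) = ((⌈s/δ⌉ : ℤ) : ℝ) := by
        rw [hjdef]; norm_cast; exact Int.toNat_of_nonneg h1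
      push_cast at this
      rw [this]
      exact Int.ceil_lt_add_one _
    refine ⟨j * k, j * m - N, ?_⟩
    have heq : (↑(j * k) : ℝ) * α - ((j * m - N : ℤ) : ℝ) - t = j * δ - s := by
      push_cast; rw [hδdef, hsdef]; ring
    rw [heq, abs_lt]
    have hδε' : -δ < ε := by rw [abs_of_neg hneg] at hδε; exact hδε
    constructor
    · have := mul_lt_mul_of_neg_right hj2 hneg
      rw [add_mul, div_mul_cancel₀ _ (ne_of_lt hneg)] at this
      nlinarith
    · have := mul_le_mul_of_nonpos_right hj1 hneg.le
      rw [div_mul_cancel₀ _ (ne_of_lt hneg)] at this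
      nlinarith

lemma planeRotation_norm (θ : ℝ) (p : EuclideanSpace ℝ (Fin 2)) :
    ‖planeRotation θ p‖ = ‖p‖ := by
  have h0 : planeRotation θ p 0 = p 0 * Real.cos θ - p 1 * Real.sin θ := rfl
  have h1 : planeRotation θ p 1 = p 0 * Real.sin θ + p 1 * Real.cos θ := rfl
  rw [my_norm2, my_norm2, h0, h1]
  congr 1
  linear_combination (p 0 ^ 2 + p 1 ^ 2) * Real.sin_sq_add_cos_sq θ

lemma planeRotation_inv (θ : ℝ) (p : EuclideanSpace ℝ (Fin 2)) :
    planeRotation θ (planeRotation (-θ) p) = p := by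
  ext i
  fin_cases i
  · show (p 0 * Real.cos (-θ) - p 1 * Real.sin (-θ)) * Real.cos θ
      - (p 0 * Real.sin (-θ) + p 1 * Real.cos (-θ)) * Real.sin θ = p 0
    rw [Real.cos_neg, Real.sin_neg]
    linear_combination p 0 * Real.sin_sq_add_cos_sq θ
  · show (p 0 * Real.cos (-θ) - p 1 * Real.sin (-θ)) * Real.sin θ
      + (p 0 * Real.sin (-θ) + p 1 * Real.cos (-θ)) * Real.cos θ = p 1
    rw [Real.cos_neg, Real.sin_neg]
    linear_combination p 1 * Real.sin_sq_add_cos_sq θ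

lemma rot_circPt (φ θ : ℝ) : planeRotation φ (circPt θ) = circPt (θ + φ) := by
  ext i
  fin_cases i
  · show Real.cos θ * Real.cos φ - Real.sin θ * Real.sin φ = Real.cos (θ + φ)
    rw [Real.cos_add]
  · show Real.cos θ * Real.sin φ + Real.sin θ * Real.cos φ = Real.sin (θ + φ)
    rw [Real.sin_add]; ring

/-- Example: the unit circle is the minimal invariant set of the R-IFS `{g, f}`, where `g` is
the rotation by `2πα` (`α` irrational) and `f(x,y) = (√(x²+y²)/3 + 2/3, 0)`. -/
theorem unit_circle_is_minimal_invariant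
    (α : ℝ) (hα : Irrational α)
    (g f : EuclideanSpace ℝ (Fin 2) → EuclideanSpace ℝ (Fin 2))
    (hg : g = planeRotation (2 * Real.pi * α))
    (hf : ∀ p, f p = ![Real.sqrt ((p 0) ^ 2 + (p 1) ^ 2) / 3 + 2 / 3, 0])
    (S : Set (EuclideanSpace ℝ (Fin 2)))
    (hS : S = {p : EuclideanSpace ℝ (Fin 2) | ‖p‖ = 1}) :
    S = (g '' S) ∪ (f '' S) ∧
    ∀ X : Set (EuclideanSpace ℝ (Fin 2)), X.Nonempty → IsClosed X →
      Bornology.IsBounded X → X = (g '' X) ∪ (f '' X) → S ⊆ X := by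
  subst hg hS
  have hπ := Real.pi_pos
  have hπ' : Real.pi ≠ 0 := ne_of_gt hπ
  have hfp : ∀ p, f p = pairE (‖p‖ / 3 + 2 / 3) 0 := by
    intro p
    rw [my_norm2]
    exact congrArg (WithLp.toLp 2) (hf p)
  have hfn : ∀ p, ‖f p‖ = ‖p‖ / 3 + 2 / 3 := by
    intro p
    have h0 : (0:ℝ) ≤ ‖p‖ / 3 + 2 / 3 := by positivity
    rw [hfp, norm_pair, show (‖p‖ / 3 + 2 / 3) ^ 2 + 0 ^ 2 = (‖p‖ / 3 + 2 / 3) ^ 2 by ring,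
      Real.sqrt_sq h0]
  constructor
  · apply Set.Subset.antisymm
    · intro p hp
      exact Set.mem_union_left _
        ⟨planeRotation (-(2 * Real.pi * α)) p,
          by simpa [Set.mem_setOf_eq, planeRotation_norm] using hp,
          planeRotation_inv _ p⟩
    · rintro p (⟨q, hq, rfl⟩ | ⟨q, hq, rfl⟩)
      · simpa [Set.mem_setOf_eq, planeRotation_norm] using hq
      · rw [Set.mem_setOf_eq] at hq ⊢
        rw [hfn q, hq]
        norm_num
  · intro X hXne hXcl hXbd hXinv
    have hfX : ∀ x ∈ X, f x ∈ X := fun x hx => by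
      rw [hXinv]; exact Or.inr ⟨x, hx, rfl⟩
    have hgX : ∀ x ∈ X, planeRotation (2 * Real.pi * α) x ∈ X := fun x hx => by
      rw [hXinv]; exact Or.inl ⟨x, hx, rfl⟩
    obtain ⟨x0, hx0⟩ := hXne
    set r0 : ℝ := ‖x0‖ / 3 + 2 / 3 with hr0def
    have hiter : ∀ n : ℕ, ∃ r : ℝ, 0 ≤ r ∧ pairE r 0 ∈ X ∧ |r - 1| = |r0 - 1| / 3 ^ n := by
      intro n
      induction n with
      | zero =>
        refine ⟨r0, by positivity, ?_, by norm_num⟩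
        have := hfX x0 hx0
        rwa [hfp x0] at this
      | succ n ih =>
        obtain ⟨r, hr, hrX, hre⟩ := ih
        refine ⟨r / 3 + 2 / 3, by positivity, ?_, ?_⟩
        · have := hfX _ hrX
          rw [hfp, norm_pair, show r ^ 2 + 0 ^ 2 = r ^ 2 by ring, Real.sqrt_sq hr] at this
          exact this
        · rw [show r / 3 + 2 / 3 - 1 = (r - 1) / 3 by ring, abs_div,
            abs_of_pos (by norm_num : (0:ℝ) < 3), hre, pow_succ]
          ring
    have h10 : pairE 1 0 ∈ X := by
      rw [← hXcl.closure_eq]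
      refine Metric.mem_closure_iff.mpr fun ε hε => ?_
      obtain ⟨n, hn⟩ : ∃ n : ℕ, |r0 - 1| / 3 ^ n < ε := by
        obtain ⟨n, hn⟩ := pow_unbounded_of_one_lt (|r0 - 1| / ε) (by norm_num : (1:ℝ) < 3)
        refine ⟨n, ?_⟩
        rw [div_lt_iff₀ (by positivity : (0:ℝ) < 3 ^ n)]
        have h := (div_lt_iff₀ hε).mp hn
        linarith [h, mul_comm ε ((3:ℝ) ^ n)]
      obtain ⟨r, hr, hrX, hre⟩ := hiter n
      refine ⟨pairE r 0, hrX, ?_⟩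
      rw [dist_pair, show ((1:ℝ) - r) ^ 2 + ((0:ℝ) - 0) ^ 2 = (r - 1) ^ 2 by ring,
        Real.sqrt_sq_eq_abs, hre]
      exact hn
    have horb : ∀ n : ℕ, circPt (2 * Real.pi * α * n) ∈ X := by
      intro n
      induction n with
      | zero =>
        have h : circPt (2 * Real.pi * α * (0:ℕ)) = pairE 1 0 := by
          norm_num [circPt]
        rw [h]
        exact h10
      | succ n ih =>
        have h := hgX _ ih
        rw [rot_circPt] at h
        have he : 2 * Real.pi * α * (n:ℝ) + 2 * Real.pi * α
            = 2 * Real.pi * α * ((n + 1 : ℕ) : ℝ) := by push_cast; ring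
        rwa [he] at h
    intro p hp
    rw [Set.mem_setOf_eq] at hp
    have hsum : (p 0) ^ 2 + (p 1) ^ 2 = 1 := by
      have h := hp
      rw [my_norm2] at h
      have h0 : (0:ℝ) ≤ (p 0) ^ 2 + (p 1) ^ 2 := by positivity
      nlinarith [Real.sq_sqrt h0]
    obtain ⟨θ, hθ⟩ : ∃ θ, circPt θ = p := by
      have h1 : -1 ≤ p 0 := by nlinarith
      have h2 : p 0 ≤ 1 := by nlinarith
      rcases le_or_gt 0 (p 1) with hy | hy
      · refine ⟨Real.arccos (p 0), ?_⟩
        have hc : Real.cos (Real.arccos (p 0)) = p 0 := Real.cos_arccos h1 h2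
        have hs : Real.sin (Real.arccos (p 0)) = p 1 := by
          rw [Real.sin_arccos, show 1 - (p 0) ^ 2 = (p 1) ^ 2 by linarith,
            Real.sqrt_sq hy]
        ext i
        fin_cases i
        · exact hc
        · exact hs
      · refine ⟨-(Real.arccos (p 0)), ?_⟩
        have hc : Real.cos (-(Real.arccos (p 0))) = p 0 := by
          rw [Real.cos_neg]; exact Real.cos_arccos h1 h2
        have hs : Real.sin (-(Real.arccos (p 0))) = p 1 := by
          rw [Real.sin_neg, Real.sin_arccos, show 1 - (p 0) ^ 2 = (p 1) ^ 2 by linarith,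
            Real.sqrt_sq_eq_abs, abs_of_neg hy]
          ring
        ext i
        fin_cases i
        · exact hc
        · exact hs
    rw [← hXcl.closure_eq]
    refine Metric.mem_closure_iff.mpr fun ε hε => ?_
    obtain ⟨n, m, hnm⟩ := dense_nat_mul α hα (θ / (2 * Real.pi))
      (show (0:ℝ) < ε / (8 * Real.pi) by positivity)
    refine ⟨circPt (2 * Real.pi * α * n), horb n, ?_⟩
    have hper : circPt (2 * Real.pi * α * n)
        = circPt (2 * Real.pi * α * n - 2 * Real.pi * m) := (circPt_periodic _ m).symm
    rw [← hθ, hper]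
    calc dist (circPt θ) (circPt (2 * Real.pi * α * n - 2 * Real.pi * m))
        ≤ 2 * |θ - (2 * Real.pi * α * n - 2 * Real.pi * m)| := circPt_dist _ _
      _ < ε := by
          have key : θ - (2 * Real.pi * α * n - 2 * Real.pi * m)
              = -(2 * Real.pi) * ((n:ℝ) * α - m - θ / (2 * Real.pi)) := by
            field_simp
            ring
          rw [key, abs_mul, abs_neg, abs_of_pos (by positivity : (0:ℝ) < 2 * Real.pi)]
          have h4 : (0:ℝ) < 4 * Real.pi := by positivity
          have hmul := mul_lt_mul_of_pos_left hnm h4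
          have heq : 4 * Real.pi * (ε / (8 * Real.pi)) = ε / 2 := by
            field_simp
            ring
          nlinarith [abs_nonneg ((n:ℝ) * α - m - θ / (2 * Real.pi))]
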